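/- Let d ≥ 3 be odd and a > 0, and define ∇̂f⁽¹⁾ : ℝ^d → ℝ^d by ∇̂f⁽¹⁾(x) = a∑_{j=1}^{(d−1)/2} ∇̂h_{2j−1}(x) − a·e_1. Then for every j ∈ {1,…,(d−1)/2} and every x ∈ K_{2j}, one has ∇̂f⁽¹⁾(x) ∈ K_{2j}. -/

import Mathlib

open scoped BigOperators RealInnerProductSpace Classical

noncomputable section

/-- The `k`-th standard basis vector of `ℝ^d`, `0`-indexed (so the paper's `e_k` is
`stdBasis d (k-1)`); out-of-range indices give `0`. -/
def stdBasis (d j : ℕ) : EuclideanSpace ℝ (Fin d) :=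
  if h : j < d then EuclideanSpace.single ⟨j, h⟩ 1 else 0

/-- The subgradient oracle `∇̂h_j` (paper's `1`-indexed `j`, so `e_{j+1} = stdBasis d j`
and `e_j = stdBasis d (j-1)`). -/
def gradh (d j : ℕ) (x : EuclideanSpace ℝ (Fin d)) : EuclideanSpace ℝ (Fin d) :=
  if ⟪stdBasis d (j - 1), x⟫ < ⟪stdBasis d j, x⟫ then stdBasis d j - stdBasis d (j - 1)
  else if ⟪stdBasis d j, x⟫ < ⟪stdBasis d (j - 1), x⟫ then stdBasis d (j - 1) - stdBasis d j
  else 0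

/-- `K_j = span{e_1, …, e_j}`. -/
def Ksub (d j : ℕ) : Submodule ℝ (EuclideanSpace ℝ (Fin d)) :=
  Submodule.span ℝ {v | ∃ i < j, v = stdBasis d i}

lemma stdBasis_mem_Ksub (d m i : ℕ) (h : i < m) : stdBasis d i ∈ Ksub d m :=
  Submodule.subset_span ⟨i, h, rfl⟩

lemma stdBasis_mem_Ksub' (d m i : ℕ) (h : d ≤ i) : stdBasis d i ∈ Ksub d m := by
  have : stdBasis d i = 0 := by simp [stdBasis, Nat.not_lt.mpr h]
  rw [this]; exact Submodule.zero_mem _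

lemma Ksub_coord (d m : ℕ) (x : EuclideanSpace ℝ (Fin d)) (hx : x ∈ Ksub d m)
    (i : Fin d) (hi : m ≤ (i : ℕ)) : x i = 0 := by
  induction hx using Submodule.span_induction with
  | mem v hv =>
    obtain ⟨k, hk, rfl⟩ := hv
    unfold stdBasis
    split
    · rw [EuclideanSpace.single_apply]
      have : i ≠ ⟨k, ‹_›⟩ := by
        intro h; apply absurd hi; rw [h]; simpa using Nat.lt_of_lt_of_le hk (le_refl m) |>.trans_le (le_refl m) |>.not_ge
      simp [this]
    · rfl
  | zero => rfl
  | add y z _ _ hy hz => show y i + z i = 0; rw [hy, hz, add_zero]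
  | smul c y _ hy => show c * y i = 0; rw [hy, mul_zero]

lemma inner_stdBasis (d k : ℕ) (x : EuclideanSpace ℝ (Fin d)) :
    ⟪stdBasis d k, x⟫ = if h : k < d then x ⟨k, h⟩ else 0 := by
  unfold stdBasis
  split
  · rw [EuclideanSpace.inner_single_left]; simp
  · simp

theorem stmt7 (d : ℕ) (hd : 3 ≤ d) (hodd : d % 2 = 1) (a : ℝ) (ha : 0 < a)
    (gf : EuclideanSpace ℝ (Fin d) → EuclideanSpace ℝ (Fin d))
    (hgf : ∀ x, gf x =
      a • (∑ j ∈ Finset.Icc 1 ((d - 1) / 2), gradh d (2 * j - 1) x) - a • stdBasis d 0) :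
    ∀ j ∈ Finset.Icc 1 ((d - 1) / 2), ∀ x ∈ Ksub d (2 * j), gf x ∈ Ksub d (2 * j) := by
  intro j hj x hx
  simp only [Finset.mem_Icc] at hj
  rw [hgf]
  refine sub_mem (Submodule.smul_mem _ _ (Submodule.sum_mem _ ?_))
    (Submodule.smul_mem _ _ (stdBasis_mem_Ksub d _ 0 (by omega)))
  intro j' hj'
  simp only [Finset.mem_Icc] at hj'
  by_cases hle : j' ≤ j
  · unfold gradh
    have h1 : gradh d (2 * j' - 1) x ∈ Ksub d (2 * j) := by
      unfold gradh
      split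
      · exact sub_mem (stdBasis_mem_Ksub d _ _ (by omega)) (stdBasis_mem_Ksub d _ _ (by omega))
      · split
        · exact sub_mem (stdBasis_mem_Ksub d _ _ (by omega)) (stdBasis_mem_Ksub d _ _ (by omega))
        · exact Submodule.zero_mem _
    exact h1
  · -- j' > j : both coordinates of x vanish, so gradh = 0
    have hz : ∀ k : ℕ, 2 * j ≤ k → ⟪stdBasis d k, x⟫ = 0 := by
      intro k hk
      rw [inner_stdBasis]
      split
      · exact Ksub_coord d (2 * j) x hx _ hk
      · rfl
    have e1 : ⟪stdBasis d (2 * j' - 1 - 1), x⟫ = 0 := hz _ (by omega)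
    have e2 : ⟪stdBasis d (2 * j' - 1), x⟫ = 0 := hz _ (by omega)
    unfold gradh
    rw [e1, e2]
    simp [Submodule.zero_mem]

end
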